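/- Let A be a semigeneric tournament and X ≠ Y two parts of A. Then the relation ∼ on X defined by: x₁ ∼ x₂ iff for every y ∈ Y the edges x₁y and x₂y have the same orientation, is an equivalence relation on X with at most two equivalence classes. -/
import Mathlib


/-- Indicator of a proposition (classically). -/
noncomputable def eInd (p : Prop) : ℕ := @ite ℕ p (Classical.propDecidable p) 1 0

/-- A semigeneric tournament: an ω-partite tournament (vertices `V`, parts indexed by
`part : V → P`, exactly one directed edge between vertices in distinct parts, no edges
within a part) such that for every pair of parts `X`, `Y`, and all `a ≠ b ∈ X`,
`c ≠ d ∈ Y`, the number of edges directed from `{a,b}` to `{c,d}` is even. -/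
structure Semigeneric (V : Type*) (P : Type*) where
  part : V → P
  E : V → V → Prop
  not_edge_same : ∀ u v, part u = part v → ¬ E u v
  total : ∀ u v, part u ≠ part v → E u v ∨ E v u
  asymm : ∀ u v, E u v → ¬ E v u
  even : ∀ a b c d, a ≠ b → c ≠ d → part a = part b → part c = part d →
    part a ≠ part c →
    Even (eInd (E a c) + eInd (E a d) + eInd (E b c) + eInd (E b d))

/-- The canonical equivalence: `x ∼ y` iff `x, y` lie in the same part and are connected
in the same direction to every vertex outside that part. -/
def canSim {V P : Type*} (T : Semigeneric V P) (x y : V) : Prop :=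
  T.part x = T.part y ∧ ∀ w, T.part w ≠ T.part x → (T.E x w ↔ T.E y w)

lemma eInd_parity (p q s t : Prop) :
    Even (eInd p + eInd q + eInd s + eInd t) ↔ ((p ↔ s) ↔ (q ↔ t)) := by
  classical
  unfold eInd
  by_cases hp : p <;> by_cases hq : q <;> by_cases hs : s <;> by_cases ht : t <;>
    simp [hp, hq, hs, ht] <;> first | decide | tauto

lemma agree_transfer {V P : Type*} (T : Semigeneric V P) {a b c d : V}
    (hab : a ≠ b) (hpab : T.part a = T.part b) (hpcd : T.part c = T.part d)
    (hac : T.part a ≠ T.part c) :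
    (T.E a c ↔ T.E b c) ↔ (T.E a d ↔ T.E b d) := by
  by_cases hcd : c = d
  · subst hcd; tauto
  · exact (eInd_parity _ _ _ _).mp (T.even a b c d hab hcd hpab hpcd hac)

theorem stmt7 {V P : Type*} (T : Semigeneric V P) (X Y : P) (hXY : X ≠ Y)
    (r : {x : V // T.part x = X} → {x : V // T.part x = X} → Prop)
    (hr : ∀ x₁ x₂, r x₁ x₂ ↔ ∀ y : V, T.part y = Y → (T.E x₁.1 y ↔ T.E x₂.1 y)) :
    Equivalence r ∧ ∀ x y z, r x y ∨ r x z ∨ r y z := by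
  constructor
  · refine ⟨fun x => (hr x x).mpr fun y hy => Iff.rfl,
      fun {x y} h => (hr y x).mpr fun w hw => ((hr x y).mp h w hw).symm,
      fun {x y z} h1 h2 => (hr x z).mpr fun w hw =>
        ((hr x y).mp h1 w hw).trans ((hr y z).mp h2 w hw)⟩
  · intro x y z
    by_cases hxy : r x y
    · exact Or.inl hxy
    by_cases hxz : r x z
    · exact Or.inr (Or.inl hxz)
    refine Or.inr (Or.inr ((hr y z).mpr fun w hw => ?_))
    -- get witnesses of disagreement
    rw [hr] at hxy hxz
    push_neg at hxy hxz
    obtain ⟨c, hc, hyc⟩ := hxy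
    obtain ⟨d, hd, hzd⟩ := hxz
    replace hyc : ¬ (T.E x.1 c ↔ T.E y.1 c) := by tauto
    replace hzd : ¬ (T.E x.1 d ↔ T.E z.1 d) := by tauto
    have hxyne : x.1 ≠ y.1 := by
      intro h; exact hyc (by rw [h])
    have hxzne : x.1 ≠ z.1 := by
      intro h; exact hzd (by rw [h])
    have hpx : T.part x.1 ≠ T.part w := by
      rw [x.2, hw]; exact hXY
    have h1 : ¬ (T.E x.1 w ↔ T.E y.1 w) := by
      intro h
      exact hyc ((agree_transfer T hxyne (x.2.trans y.2.symm) (hw.trans hc.symm) hpx).mp h)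
    have h2 : ¬ (T.E x.1 w ↔ T.E z.1 w) := by
      intro h
      exact hzd ((agree_transfer T hxzne (x.2.trans z.2.symm) (hw.trans hd.symm) hpx).mp h)
    tauto
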